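/- Let X ⊆ ℝⁿ be conically closed, i.e., for all e, f ∈ X and all reals α, β ≥ 0 we have αe + βf ∈ X. Let 𝒫 be a set of properties with scoring functions γ_p : ℝⁿ → ℝ for p ∈ 𝒫. If the strict epistemic pooling principle holds for summation pooling for all e, f ∈ X (for every p ∈ 𝒫, γ_p(e + f) > 0 ↔ γ_p(e) > 0 ∨ γ_p(f) > 0), then the strict epistemic pooling principle also holds for average pooling for all e, f ∈ X (for every p ∈ 𝒫, γ_p((e+f)/2) > 0 ↔ γ_p(e) > 0 ∨ γ_p(f) > 0). -/
import Mathlib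

/-- On a conically closed set X, if the strict epistemic pooling principle
holds for summation pooling (for every property p ∈ 𝒫), then it also holds for
average pooling. -/
theorem sum_pooling_implies_avg_pooling (n : ℕ) (P : Type*)
    (X : Set (Fin n → ℝ))
    (hX : ∀ e ∈ X, ∀ f ∈ X, ∀ α β : ℝ, 0 ≤ α → 0 ≤ β → α • e + β • f ∈ X)
    (γ : P → (Fin n → ℝ) → ℝ)
    (hpool : ∀ e ∈ X, ∀ f ∈ X, ∀ p : P,
      γ p (e + f) > 0 ↔ (γ p e > 0 ∨ γ p f > 0)) :
    ∀ e ∈ X, ∀ f ∈ X, ∀ p : P,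
      γ p ((e + f) / 2) > 0 ↔ (γ p e > 0 ∨ γ p f > 0) := by
  intro e he f hf p
  have he2 : (1/2 : ℝ) • e ∈ X := by
    simpa using hX e he e he (1/2) 0 (by norm_num) le_rfl
  have hf2 : (1/2 : ℝ) • f ∈ X := by
    simpa using hX f hf f hf (1/2) 0 (by norm_num) le_rfl
  have half : ∀ g ∈ X, ∀ hg2 : (1/2 : ℝ) • g ∈ X,
      (γ p ((1/2 : ℝ) • g) > 0 ↔ γ p g > 0) := by
    intro g hg hg2
    have := hpool _ hg2 _ hg2 p
    have hsum : (1/2 : ℝ) • g + (1/2 : ℝ) • g = g := by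
      rw [← add_smul]; norm_num
    rw [hsum, or_self] at this
    exact this.symm
  have hkey := hpool _ he2 _ hf2 p
  have havg : (e + f) / 2 = (1/2 : ℝ) • e + (1/2 : ℝ) • f := by
    ext i; simp [Pi.smul_apply, Pi.div_apply]; ring
  rw [havg, hkey, half e he he2, half f hf hf2]
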